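/- Reduction from two-counter machines to type equality: for every two-counter machine M with instructions ι₁,…,ι_m and all natural numbers m₀, n₀, construct (in the signature described in the context) the indexed type names T_i[c₁,c₂] and T_i′[c₁,c₂]; then T₁[m₀, n₀] ≡ T₁′[m₀, n₀] if and only if the computation of M starting from configuration (1, m₀, n₀) is infinite (i.e., M does not halt). -/

import Mathlib

/-! Arithmetic expressions and Presburger propositions over natural numbers,
with de Bruijn index variables. -/

inductive AExp : Type
  | const : ℕ → AExp
  | var : ℕ → AExp
  | add : AExp → AExp → AExp
  | sub : AExp → AExp → AExp
  | mul : ℕ → AExp → AExp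
deriving DecidableEq

namespace AExp

def eval (σ : ℕ → ℕ) : AExp → ℕ
  | const n => n
  | var n => σ n
  | add a b => a.eval σ + b.eval σ
  | sub a b => a.eval σ - b.eval σ
  | mul k a => k * a.eval σ

def subst (τ : ℕ → AExp) : AExp → AExp
  | const n => const n
  | var n => τ n
  | add a b => add (a.subst τ) (b.subst τ)
  | sub a b => sub (a.subst τ) (b.subst τ)
  | mul k a => mul k (a.subst τ)

def hasVar : AExp → Bool
  | const _ => false
  | var _ => true
  | add a b => a.hasVar || b.hasVar
  | sub a b => a.hasVar || b.hasVar
  | mul _ a => a.hasVar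

/-- Normalization: a closed arithmetic expression is replaced by its value. -/
def norm (e : AExp) : AExp := if e.hasVar then e else .const (e.eval (fun _ => 0))

/-- Substitution followed by normalization of closed expressions to their values. -/
def substN (τ : ℕ → AExp) (e : AExp) : AExp := (e.subst τ).norm

/-- All variables of `e` are `< k`. -/
def ClosedAt (k : ℕ) : AExp → Prop
  | const _ => True
  | var n => n < k
  | add a b => a.ClosedAt k ∧ b.ClosedAt k
  | sub a b => a.ClosedAt k ∧ b.ClosedAt k
  | mul _ a => a.ClosedAt k

end AExp

/-- Cons for substitutions/assignments. -/
def scons {α : Type*} (i : α) (σ : ℕ → α) : ℕ → α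
  | 0 => i
  | n + 1 => σ n

/-- Lifting a substitution under a binder. -/
def liftτ (τ : ℕ → AExp) : ℕ → AExp :=
  scons (AExp.var 0) (fun n => (τ n).subst (fun k => AExp.var (k + 1)))

inductive AProp : Type
  | aeq : AExp → AExp → AProp
  | agt : AExp → AExp → AProp
  | tt : AProp
  | ff : AProp
  | conj : AProp → AProp → AProp
  | disj : AProp → AProp → AProp
  | neg : AProp → AProp
  | aexists : AProp → AProp
  | aforall : AProp → AProp

namespace AProp

def holds (σ : ℕ → ℕ) : AProp → Prop
  | aeq a b => a.eval σ = b.eval σ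
  | agt a b => b.eval σ < a.eval σ
  | tt => True
  | ff => False
  | conj φ ψ => φ.holds σ ∧ ψ.holds σ
  | disj φ ψ => φ.holds σ ∨ ψ.holds σ
  | neg φ => ¬ φ.holds σ
  | aexists φ => ∃ i : ℕ, φ.holds (scons i σ)
  | aforall φ => ∀ i : ℕ, φ.holds (scons i σ)

def subst (τ : ℕ → AExp) : AProp → AProp
  | aeq a b => aeq (a.subst τ) (b.subst τ)
  | agt a b => agt (a.subst τ) (b.subst τ)
  | tt => tt
  | ff => ff
  | conj φ ψ => conj (φ.subst τ) (ψ.subst τ)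
  | disj φ ψ => disj (φ.subst τ) (ψ.subst τ)
  | neg φ => neg (φ.subst τ)
  | aexists φ => aexists (φ.subst (liftτ τ))
  | aforall φ => aforall (φ.subst (liftτ τ))

def ClosedAt (k : ℕ) : AProp → Prop
  | aeq a b => a.ClosedAt k ∧ b.ClosedAt k
  | agt a b => a.ClosedAt k ∧ b.ClosedAt k
  | tt => True
  | ff => True
  | conj φ ψ => φ.ClosedAt k ∧ ψ.ClosedAt k
  | disj φ ψ => φ.ClosedAt k ∧ ψ.ClosedAt k
  | neg φ => φ.ClosedAt k
  | aexists φ => φ.ClosedAt (k + 1)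
  | aforall φ => φ.ClosedAt (k + 1)

end AProp

/-! Session types.  Labeled choices are represented by association lists of
labels (natural numbers) and types.  Quantifiers bind a de Bruijn index
variable. -/

inductive STy : Type
  | ichoice : List (ℕ × STy) → STy                -- ⊕{ℓ : A_ℓ}
  | echoice : List (ℕ × STy) → STy                -- &{ℓ : A_ℓ}
  | tensor : STy → STy → STy                      -- A ⊗ B
  | lolli : STy → STy → STy                       -- A ⊸ B
  | one : STy                                     -- 1
  | tname : ℕ → List AExp → STy                   -- V[ē]
  | sassert : AProp → STy → STy                   -- ?{φ}. A
  | sassume : AProp → STy → STy                   -- !{φ}. A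
  | sexists : STy → STy                           -- ?n. A
  | sforall : STy → STy                           -- !n. A

namespace STy

/-- Substitution of arithmetic expressions for index variables in a session type. -/
def subst (τ : ℕ → AExp) : STy → STy
  | ichoice L => ichoice (L.attach.map (fun p => (p.1.1, p.1.2.subst τ)))
  | echoice L => echoice (L.attach.map (fun p => (p.1.1, p.1.2.subst τ)))
  | tensor A B => tensor (A.subst τ) (B.subst τ)
  | lolli A B => lolli (A.subst τ) (B.subst τ)
  | one => one
  | tname v es => tname v (es.map (AExp.substN τ))
  | sassert φ A => sassert (φ.subst τ) (A.subst τ)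
  | sassume φ A => sassume (φ.subst τ) (A.subst τ)
  | sexists A => sexists (A.subst (liftτ τ))
  | sforall A => sforall (A.subst (liftτ τ))
decreasing_by
  all_goals simp_wf
  all_goals try omega
  all_goals
    (obtain ⟨⟨l, A⟩, hp⟩ := p
     have h := List.sizeOf_lt_of_mem hp
     simp [Prod.mk.sizeOf_spec] at h ⊢
     omega)

/-- Substituting a number for the index variable bound by a quantifier. -/
def subst0 (i : ℕ) (A : STy) : STy := A.subst (scons (AExp.const i) AExp.var)

/-- Ground instantiation of all free index variables by natural numbers. -/
def substC (σ : ℕ → ℕ) (A : STy) : STy := A.subst (fun n => AExp.const (σ n))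

/-- All free index variables of the type are below `k`. -/
inductive ClosedAt : ℕ → STy → Prop
  | ichoice {k L} : (∀ p ∈ L, ClosedAt k p.2) → ClosedAt k (ichoice L)
  | echoice {k L} : (∀ p ∈ L, ClosedAt k p.2) → ClosedAt k (echoice L)
  | tensor {k A B} : ClosedAt k A → ClosedAt k B → ClosedAt k (tensor A B)
  | lolli {k A B} : ClosedAt k A → ClosedAt k B → ClosedAt k (lolli A B)
  | one {k} : ClosedAt k one
  | tname {k v es} : (∀ e ∈ es, e.ClosedAt k) → ClosedAt k (tname v es)
  | sassert {k φ A} : φ.ClosedAt k → ClosedAt k A → ClosedAt k (sassert φ A)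
  | sassume {k φ A} : φ.ClosedAt k → ClosedAt k A → ClosedAt k (sassume φ A)
  | sexists {k A} : ClosedAt (k + 1) A → ClosedAt k (sexists A)
  | sforall {k A} : ClosedAt (k + 1) A → ClosedAt k (sforall A)

/-- A closed session type: no free index variables. -/
def Closed (A : STy) : Prop := ClosedAt 0 A

def isName : STy → Prop
  | tname _ _ => True
  | _ => False

end STy

/-- A signature is a finite list of type definitions; the type name `v` is
defined by the `v`-th entry (whose free index variables `0, …` are the
parameters `n̄`). -/
abbrev Sig : Type := List STy

/-- A contractive signature: no definition body is itself a type name. -/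
def Contractive (Sg : Sig) : Prop := ∀ B ∈ Sg, ¬ B.isName

/-- Unfolding of a type: a type name is replaced by its instantiated
definition; all other types are returned unchanged. -/
def unfoldT (Sg : Sig) : STy → STy
  | .tname v es => (Sg.getD v .one).subst (fun n => es.getD n (.const 0))
  | A => A

/-- The default (empty) assignment; used to evaluate closed propositions
in the standard model. -/
def σ0 : ℕ → ℕ := fun _ => 0

/-- Componentwise matching of labeled alternatives by a relation. -/
def MatchAlts (R : STy → STy → Prop) (L L' : List (ℕ × STy)) : Prop :=
  List.Forall₂ (fun p q => p.1 = q.1 ∧ R p.2 q.2) L L'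

/-- `R` is a type bisimulation (Definition of type bisimulation). -/
def IsBisim (Sg : Sig) (R : STy → STy → Prop) : Prop :=
  ∀ ⦃A B : STy⦄, R A B →
    (∀ L, unfoldT Sg A = .ichoice L →
      ∃ L', unfoldT Sg B = .ichoice L' ∧ MatchAlts R L L') ∧
    (∀ L, unfoldT Sg A = .echoice L →
      ∃ L', unfoldT Sg B = .echoice L' ∧ MatchAlts R L L') ∧
    (∀ A₁ A₂, unfoldT Sg A = .tensor A₁ A₂ →
      ∃ B₁ B₂, unfoldT Sg B = .tensor B₁ B₂ ∧ R A₁ B₁ ∧ R A₂ B₂) ∧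
    (∀ A₁ A₂, unfoldT Sg A = .lolli A₁ A₂ →
      ∃ B₁ B₂, unfoldT Sg B = .lolli B₁ B₂ ∧ R A₁ B₁ ∧ R A₂ B₂) ∧
    (unfoldT Sg A = .one → unfoldT Sg B = .one) ∧
    (∀ φ A', unfoldT Sg A = .sassert φ A' →
      ∃ ψ B', unfoldT Sg B = .sassert ψ B' ∧
        ((φ.holds σ0 ∧ ψ.holds σ0 ∧ R A' B') ∨ (¬ φ.holds σ0 ∧ ¬ ψ.holds σ0))) ∧
    (∀ φ A', unfoldT Sg A = .sassume φ A' →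
      ∃ ψ B', unfoldT Sg B = .sassume ψ B' ∧
        ((φ.holds σ0 ∧ ψ.holds σ0 ∧ R A' B') ∨ (¬ φ.holds σ0 ∧ ¬ ψ.holds σ0))) ∧
    (∀ A', unfoldT Sg A = .sexists A' →
      ∃ B', unfoldT Sg B = .sexists B' ∧ ∀ i : ℕ, R (A'.subst0 i) (B'.subst0 i)) ∧
    (∀ A', unfoldT Sg A = .sforall A' →
      ∃ B', unfoldT Sg B = .sforall B' ∧ ∀ i : ℕ, R (A'.subst0 i) (B'.subst0 i))

/-- Type equality: `A ≡ B` iff some type bisimulation relates them. -/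
def TpEq (Sg : Sig) (A B : STy) : Prop :=
  ∃ R : STy → STy → Prop, IsBisim Sg R ∧ R A B

/-- The quantified judgment `∀V. C ⇒ A ≡ B`. -/
def EqUnder (Sg : Sig) (C : AProp) (A B : STy) : Prop :=
  ∀ σ : ℕ → ℕ, C.holds σ → TpEq Sg (A.substC σ) (B.substC σ)

/-! Statement 4: reduction from two-counter machines to type equality. -/

/-- Instructions of a two-counter machine.  The Boolean selects the counter:
`false` is counter 1, `true` is counter 2.  Instruction numbers are 1-based. -/
inductive Instr : Type
  | inc : Bool → ℕ → Instr            -- inc(c_j); goto k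
  | jzdec : Bool → ℕ → ℕ → Instr      -- if c_j = 0 goto k else dec(c_j); goto l
  | halt : Instr

/-- A configuration: current instruction number and the two counter values. -/
abbrev MConfig : Type := ℕ × ℕ × ℕ

/-- One step of the two-counter machine `M`; `none` if there is no successor
configuration (in particular at a `halt` instruction). -/
def stepM (M : List Instr) : MConfig → Option MConfig
  | (i, c₁, c₂) =>
    match M[i - 1]? with
    | none => none
    | some .halt => none
    | some (.inc b k) =>
        some (k, if b then c₁ else c₁ + 1, if b then c₂ + 1 else c₂)
    | some (.jzdec b k l) =>
        if b then
          (if c₂ = 0 then some (k, c₁, c₂) else some (l, c₁, c₂ - 1))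
        else
          (if c₁ = 0 then some (k, c₁, c₂) else some (l, c₁ - 1, c₂))

/-- Iterated machine steps. -/
def iterM (M : List Instr) : ℕ → MConfig → Option MConfig
  | 0, cfg => some cfg
  | n + 1, cfg => (stepM M cfg).bind (iterM M n)

/-- Well-formed instructions of a machine with `m` instructions: all goto
targets lie in {1, …, m}. -/
def WFInstr (m : ℕ) : Instr → Prop
  | .inc _ k => 1 ≤ k ∧ k ≤ m
  | .jzdec _ k l => (1 ≤ k ∧ k ≤ m) ∧ (1 ≤ l ∧ l ≤ m)
  | .halt => True

/-! The reduction.  Type names are numbered as follows: name 0 is `T_inf`,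
name 1 is `T_inf′`, and for instruction `i` (1 ≤ i ≤ m), name `2*i` is
`T_i[c₁,c₂]` and name `2*i+1` is `T_i′[c₁,c₂]` (with parameters `c₁ = var 0`,
`c₂ = var 1`).  Labels: `ℓ = 0`, `ℓ′ = 1`, `inc₁ = 2`, `inc₂ = 3`,
`zero₁ = 4`, `dec₁ = 5`, `zero₂ = 6`, `dec₂ = 7`. -/

/-- The name of `T_k` (if `pr = false`) resp. `T_k′` (if `pr = true`). -/
def nameOf (pr : Bool) (k : ℕ) : ℕ := 2 * k + (if pr then 1 else 0)

/-- The body of the definition of `T_i[c₁,c₂]` (or `T_i′[c₁,c₂]` when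
`pr = true`) for instruction `ι_i`.  For `halt`, the body of `T_inf`
(resp. `T_inf′`) is inlined to keep the definition contractive. -/
def instrBody (pr : Bool) : Instr → STy
  | .inc b k =>
      if b then
        .ichoice [(3, .tname (nameOf pr k) [.var 0, .add (.var 1) (.const 1)])]
      else
        .ichoice [(2, .tname (nameOf pr k) [.add (.var 0) (.const 1), .var 1])]
  | .jzdec b k l =>
      if b then
        .ichoice
          [(6, .sassert (.aeq (.var 1) (.const 0))
                 (.tname (nameOf pr k) [.var 0, .var 1])),
           (7, .sassert (.agt (.var 1) (.const 0))
                 (.tname (nameOf pr l) [.var 0, .sub (.var 1) (.const 1)]))]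
      else
        .ichoice
          [(4, .sassert (.aeq (.var 0) (.const 0))
                 (.tname (nameOf pr k) [.var 0, .var 1])),
           (5, .sassert (.agt (.var 0) (.const 0))
                 (.tname (nameOf pr l) [.sub (.var 0) (.const 1), .var 1]))]
  | .halt =>
      if pr then .ichoice [(1, .tname 1 [])] else .ichoice [(0, .tname 0 [])]

/-- The signature of the reduction: `T_inf`, `T_inf′`, and `T_i`, `T_i′` for
each instruction `ι_i` of the machine. -/
def sigOf (M : List Instr) : Sig :=
  [.ichoice [(0, .tname 0 [])], .ichoice [(1, .tname 1 [])]] ++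
    (M.map (fun ins => [instrBody false ins, instrBody true ins])).flatten


/-! ### Auxiliary development for the proof -/

section Aux

/-- Abbreviation for the types `T_i[c₁,c₂]` (resp. `T_i′`). -/
def Tn (pr : Bool) (i c₁ c₂ : ℕ) : STy :=
  .tname (nameOf pr i) [.const c₁, .const c₂]

lemma subst_ichoice (τ : ℕ → AExp) (L : List (ℕ × STy)) :
    (STy.ichoice L).subst τ = .ichoice (L.map (fun p => (p.1, p.2.subst τ))) := by
  rw [STy.subst]
  exact congrArg STy.ichoice (List.attach_map_val (l := L) (f := fun p => (p.1, p.2.subst τ)))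

lemma subst_tname (τ : ℕ → AExp) (v : ℕ) (es : List AExp) :
    (STy.tname v es).subst τ = .tname v (es.map (AExp.substN τ)) := by
  rw [STy.subst]

lemma subst_sassert (τ : ℕ → AExp) (φ : AProp) (A : STy) :
    (STy.sassert φ A).subst τ = .sassert (φ.subst τ) (A.subst τ) := by
  rw [STy.subst]

lemma flat_getD (L : List Instr) (j : ℕ) (hj : j < L.length) (pr : Bool) :
    ((L.map (fun ins => [instrBody false ins, instrBody true ins])).flatten).getD
      (2 * j + (if pr then 1 else 0)) .one = instrBody pr (L.getD j .halt) := by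
  induction L generalizing j with
  | nil => simp at hj
  | cons a L ih =>
    cases j with
    | zero => cases pr <;> simp
    | succ j =>
      rw [show 2 * (j + 1) + (if pr then 1 else 0)
            = ((2 * j + (if pr then 1 else 0)) + 1) + 1 by cases pr <;> omega]
      simp only [List.map_cons, List.flatten_cons, List.cons_append, List.nil_append,
        List.getD_cons_succ]
      exact ih j (by simpa using hj)

lemma sig_getD (M : List Instr) (pr : Bool) {i : ℕ} (h1 : 1 ≤ i) (h2 : i ≤ M.length) :
    (sigOf M).getD (nameOf pr i) .one = instrBody pr (M.getD (i - 1) .halt) := by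
  obtain ⟨j, rfl⟩ : ∃ j, i = j + 1 := ⟨i - 1, by omega⟩
  rw [show nameOf pr (j + 1) = ((2 * j + (if pr then 1 else 0)) + 1) + 1 by
    unfold nameOf; cases pr <;> omega]
  show (_ :: _ :: _).getD _ _ = _
  simp only [List.getD_cons_succ, Nat.add_sub_cancel]
  exact flat_getD M j (by omega) pr

lemma unfold_eq (M : List Instr) (pr : Bool) {i : ℕ} (c₁ c₂ : ℕ)
    (h1 : 1 ≤ i) (h2 : i ≤ M.length) :
    unfoldT (sigOf M) (Tn pr i c₁ c₂) =
      (instrBody pr (M.getD (i - 1) .halt)).subst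
        (fun n => ([AExp.const c₁, AExp.const c₂]).getD n (.const 0)) := by
  show ((sigOf M).getD (nameOf pr i) .one).subst _ = _
  rw [sig_getD M pr h1 h2]

lemma body_inc_f (pr : Bool) (k c₁ c₂ : ℕ) :
    (instrBody pr (.inc false k)).subst
        (fun n => ([AExp.const c₁, AExp.const c₂]).getD n (.const 0)) =
      .ichoice [(2, Tn pr k (c₁ + 1) c₂)] := by
  simp [instrBody, subst_ichoice, subst_tname, AExp.substN, AExp.subst, AExp.norm,
    AExp.hasVar, AExp.eval, Tn]

lemma body_inc_t (pr : Bool) (k c₁ c₂ : ℕ) :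
    (instrBody pr (.inc true k)).subst
        (fun n => ([AExp.const c₁, AExp.const c₂]).getD n (.const 0)) =
      .ichoice [(3, Tn pr k c₁ (c₂ + 1))] := by
  simp [instrBody, subst_ichoice, subst_tname, AExp.substN, AExp.subst, AExp.norm,
    AExp.hasVar, AExp.eval, Tn]

lemma body_jz_f (pr : Bool) (k l c₁ c₂ : ℕ) :
    (instrBody pr (.jzdec false k l)).subst
        (fun n => ([AExp.const c₁, AExp.const c₂]).getD n (.const 0)) =
      .ichoice [(4, .sassert (.aeq (.const c₁) (.const 0)) (Tn pr k c₁ c₂)),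
                (5, .sassert (.agt (.const c₁) (.const 0)) (Tn pr l (c₁ - 1) c₂))] := by
  simp [instrBody, subst_ichoice, subst_tname, subst_sassert, AProp.subst, AExp.substN,
    AExp.subst, AExp.norm, AExp.hasVar, AExp.eval, Tn]

lemma body_jz_t (pr : Bool) (k l c₁ c₂ : ℕ) :
    (instrBody pr (.jzdec true k l)).subst
        (fun n => ([AExp.const c₁, AExp.const c₂]).getD n (.const 0)) =
      .ichoice [(6, .sassert (.aeq (.const c₂) (.const 0)) (Tn pr k c₁ c₂)),
                (7, .sassert (.agt (.const c₂) (.const 0)) (Tn pr l c₁ (c₂ - 1)))] := by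
  simp [instrBody, subst_ichoice, subst_tname, subst_sassert, AProp.subst, AExp.substN,
    AExp.subst, AExp.norm, AExp.hasVar, AExp.eval, Tn]

lemma body_halt (pr : Bool) (c₁ c₂ : ℕ) :
    (instrBody pr .halt).subst
        (fun n => ([AExp.const c₁, AExp.const c₂]).getD n (.const 0)) =
      .ichoice [(if pr then 1 else 0, .tname (if pr then 1 else 0) [])] := by
  cases pr <;>
  simp [instrBody, subst_ichoice, subst_tname, AExp.substN, AExp.subst, AExp.norm,
    AExp.hasVar, AExp.eval]

end Aux


section Machine

lemma iterM_succ_right (M : List Instr) (n : ℕ) (cfg : MConfig) :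
    iterM M (n + 1) cfg = (iterM M n cfg).bind (stepM M) := by
  induction n generalizing cfg with
  | zero => cases h : stepM M cfg <;> simp [iterM, h]
  | succ n ih =>
    show (stepM M cfg).bind (iterM M (n + 1))
        = ((stepM M cfg).bind (iterM M n)).bind (stepM M)
    cases h : stepM M cfg with
    | none => rfl
    | some cfg' => exact ih cfg'

lemma inf_succ {M : List Instr} {cfg cfg' : MConfig}
    (hs : stepM M cfg = some cfg') (hinf : ∀ n, (iterM M n cfg).isSome) :
    ∀ n, (iterM M n cfg').isSome := by
  intro n
  have h := hinf (n + 1)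
  rwa [show iterM M (n + 1) cfg = iterM M n cfg' by simp [iterM, hs]] at h

lemma step_exists {M : List Instr} {i c₁ c₂ : ℕ}
    (hinf : ∀ n, (iterM M n (i, c₁, c₂)).isSome) :
    ∃ ins, M[i - 1]? = some ins ∧ ins ≠ .halt := by
  have h := hinf 1
  cases hg : M[i - 1]? with
  | none =>
    rw [show iterM M 1 (i,c₁,c₂) = (stepM M (i,c₁,c₂)).bind (iterM M 0) from rfl,
      show stepM M (i,c₁,c₂) = none by simp [stepM, hg]] at h
    simp at h
  | some ins =>
    refine ⟨ins, rfl, ?_⟩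
    rintro rfl
    rw [show iterM M 1 (i,c₁,c₂) = (stepM M (i,c₁,c₂)).bind (iterM M 0) from rfl,
      show stepM M (i,c₁,c₂) = none by simp [stepM, hg]] at h
    simp at h

lemma getD_of_get? {M : List Instr} {j : ℕ} {ins : Instr}
    (hg : M[j]? = some ins) : M.getD j .halt = ins := by
  rw [List.getD_eq_getElem?_getD, hg]; rfl

lemma bound_of_get? {M : List Instr} {j : ℕ} {ins : Instr}
    (hg : M[j]? = some ins) : j < M.length := (List.getElem?_eq_some_iff.mp hg).1

end Machine

section Clauses

/-- The nine bisimulation clauses hold at `(A, B)` whenever both unfold to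
internal choices matched by `R`. -/
lemma ichoice_clauses {Sg : Sig} {R : STy → STy → Prop} {A B : STy}
    {LA LB : List (ℕ × STy)}
    (hA : unfoldT Sg A = .ichoice LA) (hB : unfoldT Sg B = .ichoice LB)
    (hM : MatchAlts R LA LB) :
    (∀ L, unfoldT Sg A = .ichoice L →
      ∃ L', unfoldT Sg B = .ichoice L' ∧ MatchAlts R L L') ∧
    (∀ L, unfoldT Sg A = .echoice L →
      ∃ L', unfoldT Sg B = .echoice L' ∧ MatchAlts R L L') ∧
    (∀ A₁ A₂, unfoldT Sg A = .tensor A₁ A₂ →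
      ∃ B₁ B₂, unfoldT Sg B = .tensor B₁ B₂ ∧ R A₁ B₁ ∧ R A₂ B₂) ∧
    (∀ A₁ A₂, unfoldT Sg A = .lolli A₁ A₂ →
      ∃ B₁ B₂, unfoldT Sg B = .lolli B₁ B₂ ∧ R A₁ B₁ ∧ R A₂ B₂) ∧
    (unfoldT Sg A = .one → unfoldT Sg B = .one) ∧
    (∀ φ A', unfoldT Sg A = .sassert φ A' →
      ∃ ψ B', unfoldT Sg B = .sassert ψ B' ∧
        ((φ.holds σ0 ∧ ψ.holds σ0 ∧ R A' B') ∨ (¬ φ.holds σ0 ∧ ¬ ψ.holds σ0))) ∧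
    (∀ φ A', unfoldT Sg A = .sassume φ A' →
      ∃ ψ B', unfoldT Sg B = .sassume ψ B' ∧
        ((φ.holds σ0 ∧ ψ.holds σ0 ∧ R A' B') ∨ (¬ φ.holds σ0 ∧ ¬ ψ.holds σ0))) ∧
    (∀ A', unfoldT Sg A = .sexists A' →
      ∃ B', unfoldT Sg B = .sexists B' ∧ ∀ i : ℕ, R (A'.subst0 i) (B'.subst0 i)) ∧
    (∀ A', unfoldT Sg A = .sforall A' →
      ∃ B', unfoldT Sg B = .sforall B' ∧ ∀ i : ℕ, R (A'.subst0 i) (B'.subst0 i)) := by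
  refine ⟨fun L hL => ?_,
    fun L hL => absurd hL (by rw [hA]; simp),
    fun A₁ A₂ hL => absurd hL (by rw [hA]; simp),
    fun A₁ A₂ hL => absurd hL (by rw [hA]; simp),
    fun hL => absurd hL (by rw [hA]; simp),
    fun ψ A' hL => absurd hL (by rw [hA]; simp),
    fun ψ A' hL => absurd hL (by rw [hA]; simp),
    fun A' hL => absurd hL (by rw [hA]; simp),
    fun A' hL => absurd hL (by rw [hA]; simp)⟩
  rw [hA] at hL
  injection hL with h'
  subst h'
  exact ⟨LB, hB, hM⟩

/-- The nine bisimulation clauses hold at a pair of assertions with the same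
proposition, provided `R` relates the continuations when the proposition holds. -/
lemma sassert_clauses {Sg : Sig} {R : STy → STy → Prop} {φ : AProp} {A B : STy}
    (h : φ.holds σ0 → R A B) :
    (∀ L, unfoldT Sg (.sassert φ A) = .ichoice L →
      ∃ L', unfoldT Sg (.sassert φ B) = .ichoice L' ∧ MatchAlts R L L') ∧
    (∀ L, unfoldT Sg (.sassert φ A) = .echoice L →
      ∃ L', unfoldT Sg (.sassert φ B) = .echoice L' ∧ MatchAlts R L L') ∧
    (∀ A₁ A₂, unfoldT Sg (.sassert φ A) = .tensor A₁ A₂ →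
      ∃ B₁ B₂, unfoldT Sg (.sassert φ B) = .tensor B₁ B₂ ∧ R A₁ B₁ ∧ R A₂ B₂) ∧
    (∀ A₁ A₂, unfoldT Sg (.sassert φ A) = .lolli A₁ A₂ →
      ∃ B₁ B₂, unfoldT Sg (.sassert φ B) = .lolli B₁ B₂ ∧ R A₁ B₁ ∧ R A₂ B₂) ∧
    (unfoldT Sg (.sassert φ A) = .one → unfoldT Sg (.sassert φ B) = .one) ∧
    (∀ ψ A', unfoldT Sg (.sassert φ A) = .sassert ψ A' →
      ∃ ψ' B', unfoldT Sg (.sassert φ B) = .sassert ψ' B' ∧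
        ((ψ.holds σ0 ∧ ψ'.holds σ0 ∧ R A' B') ∨ (¬ ψ.holds σ0 ∧ ¬ ψ'.holds σ0))) ∧
    (∀ ψ A', unfoldT Sg (.sassert φ A) = .sassume ψ A' →
      ∃ ψ' B', unfoldT Sg (.sassert φ B) = .sassume ψ' B' ∧
        ((ψ.holds σ0 ∧ ψ'.holds σ0 ∧ R A' B') ∨ (¬ ψ.holds σ0 ∧ ¬ ψ'.holds σ0))) ∧
    (∀ A', unfoldT Sg (.sassert φ A) = .sexists A' →
      ∃ B', unfoldT Sg (.sassert φ B) = .sexists B' ∧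
        ∀ i : ℕ, R (A'.subst0 i) (B'.subst0 i)) ∧
    (∀ A', unfoldT Sg (.sassert φ A) = .sforall A' →
      ∃ B', unfoldT Sg (.sassert φ B) = .sforall B' ∧
        ∀ i : ℕ, R (A'.subst0 i) (B'.subst0 i)) := by
  have hA : unfoldT Sg (.sassert φ A) = .sassert φ A := rfl
  have hB : unfoldT Sg (.sassert φ B) = .sassert φ B := rfl
  refine ⟨fun L hL => absurd hL (by rw [hA]; simp),
    fun L hL => absurd hL (by rw [hA]; simp),
    fun A₁ A₂ hL => absurd hL (by rw [hA]; simp),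
    fun A₁ A₂ hL => absurd hL (by rw [hA]; simp),
    fun hL => absurd hL (by rw [hA]; simp),
    fun ψ A' hψ => ?_,
    fun ψ A' hL => absurd hL (by rw [hA]; simp),
    fun A' hL => absurd hL (by rw [hA]; simp),
    fun A' hL => absurd hL (by rw [hA]; simp)⟩
  rw [hA] at hψ
  injection hψ with h1 h2
  subst h1; subst h2
  refine ⟨φ, B, hB, ?_⟩
  by_cases hφ : φ.holds σ0
  · exact Or.inl ⟨hφ, hφ, h hφ⟩
  · exact Or.inr ⟨hφ, hφ⟩

end Clauses


section Main

/-- The candidate bisimulation for the "machine runs forever" direction. -/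
inductive RR (M : List Instr) : STy → STy → Prop
  | conf (i c₁ c₂ : ℕ) (h1 : 1 ≤ i)
      (hinf : ∀ n, (iterM M n (i, c₁, c₂)).isSome) :
      RR M (Tn false i c₁ c₂) (Tn true i c₁ c₂)
  | asrt (φ : AProp) (A B : STy) (h : φ.holds σ0 → RR M A B) :
      RR M (.sassert φ A) (.sassert φ B)

lemma RR_bisim (M : List Instr) (hwf : ∀ ins ∈ M, WFInstr M.length ins) :
    IsBisim (sigOf M) (RR M) := by
  intro A B hAB
  cases hAB with
  | asrt φ A B h => exact sassert_clauses h
  | conf i c₁ c₂ h1 hinf =>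
    obtain ⟨ins, hg, hhalt⟩ := step_exists hinf
    have hgd := getD_of_get? hg
    have h2 : i ≤ M.length := by have := bound_of_get? hg; omega
    have hmem : ins ∈ M := List.mem_of_getElem? hg
    have hg' : M[i - 1]? = some ins := hg
    have hAf := unfold_eq M false c₁ c₂ h1 h2
    have hAt := unfold_eq M true c₁ c₂ h1 h2
    rw [hgd] at hAf hAt
    cases ins with
    | halt => exact absurd rfl hhalt
    | inc b k =>
      have hk := hwf _ hmem
      cases b with
      | false =>
        rw [body_inc_f] at hAf hAt
        have hstep : stepM M (i, c₁, c₂) = some (k, c₁ + 1, c₂) := by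
          simp [stepM, hg']
        exact ichoice_clauses hAf hAt
          (List.Forall₂.cons ⟨rfl, RR.conf k _ _ hk.1 (inf_succ hstep hinf)⟩
            List.Forall₂.nil)
      | true =>
        rw [body_inc_t] at hAf hAt
        have hstep : stepM M (i, c₁, c₂) = some (k, c₁, c₂ + 1) := by
          simp [stepM, hg']
        exact ichoice_clauses hAf hAt
          (List.Forall₂.cons ⟨rfl, RR.conf k _ _ hk.1 (inf_succ hstep hinf)⟩
            List.Forall₂.nil)
    | jzdec b k l =>
      have hk := hwf _ hmem
      cases b with
      | false =>
        rw [body_jz_f] at hAf hAt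
        refine ichoice_clauses hAf hAt
          (List.Forall₂.cons ⟨rfl, RR.asrt _ _ _ ?_⟩
            (List.Forall₂.cons ⟨rfl, RR.asrt _ _ _ ?_⟩ List.Forall₂.nil))
        · intro hφ
          have hc : c₁ = 0 := by simpa [AProp.holds, AExp.eval] using hφ
          have hstep : stepM M (i, c₁, c₂) = some (k, c₁, c₂) := by
            simp [stepM, hg', hc]
          exact RR.conf k _ _ hk.1.1 (inf_succ hstep hinf)
        · intro hφ
          have hc : c₁ ≠ 0 := by
            have : (0:ℕ) < c₁ := by simpa [AProp.holds, AExp.eval] using hφ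
            omega
          have hstep : stepM M (i, c₁, c₂) = some (l, c₁ - 1, c₂) := by
            simp [stepM, hg', hc]
          exact RR.conf l _ _ hk.2.1 (inf_succ hstep hinf)
      | true =>
        rw [body_jz_t] at hAf hAt
        refine ichoice_clauses hAf hAt
          (List.Forall₂.cons ⟨rfl, RR.asrt _ _ _ ?_⟩
            (List.Forall₂.cons ⟨rfl, RR.asrt _ _ _ ?_⟩ List.Forall₂.nil))
        · intro hφ
          have hc : c₂ = 0 := by simpa [AProp.holds, AExp.eval] using hφ
          have hstep : stepM M (i, c₁, c₂) = some (k, c₁, c₂) := by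
            simp [stepM, hg', hc]
          exact RR.conf k _ _ hk.1.1 (inf_succ hstep hinf)
        · intro hφ
          have hc : c₂ ≠ 0 := by
            have : (0:ℕ) < c₂ := by simpa [AProp.holds, AExp.eval] using hφ
            omega
          have hstep : stepM M (i, c₁, c₂) = some (l, c₁, c₂ - 1) := by
            simp [stepM, hg', hc]
          exact RR.conf l _ _ hk.2.1 (inf_succ hstep hinf)

/-- Any bisimulation relating `T_i` and `T_i′` forces a machine step and
relates the successor pair. -/
lemma bisim_step (M : List Instr) (hwf : ∀ ins ∈ M, WFInstr M.length ins)
    {R : STy → STy → Prop} (hR : IsBisim (sigOf M) R)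
    {i c₁ c₂ : ℕ} (h1 : 1 ≤ i) (h2 : i ≤ M.length)
    (hr : R (Tn false i c₁ c₂) (Tn true i c₁ c₂)) :
    ∃ j d₁ d₂, stepM M (i, c₁, c₂) = some (j, d₁, d₂) ∧ 1 ≤ j ∧ j ≤ M.length ∧
      R (Tn false j d₁ d₂) (Tn true j d₁ d₂) := by
  cases hg : M[i - 1]? with
  | none =>
    exfalso
    have := List.getElem?_eq_none_iff.mp hg
    omega
  | some ins =>
    have hgd := getD_of_get? hg
    have hmem : ins ∈ M := List.mem_of_getElem? hg
    have hg' : M[i - 1]? = some ins := hg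
    have hAf := unfold_eq M false c₁ c₂ h1 h2
    have hAt := unfold_eq M true c₁ c₂ h1 h2
    rw [hgd] at hAf hAt
    cases ins with
    | halt =>
      exfalso
      rw [body_halt] at hAf hAt
      obtain ⟨L', hB', hM⟩ := (hR hr).1 _ hAf
      rw [hAt] at hB'
      injection hB' with h'
      subst h'
      cases hM with
      | cons hpq _ => exact absurd hpq.1 (by simp)
    | inc b k =>
      have hk := hwf _ hmem
      cases b with
      | false =>
        rw [body_inc_f] at hAf hAt
        obtain ⟨L', hB', hM⟩ := (hR hr).1 _ hAf
        rw [hAt] at hB'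
        injection hB' with h'
        subst h'
        cases hM with
        | cons hpq _ => exact ⟨k, c₁ + 1, c₂, by simp [stepM, hg'], hk.1, hk.2, hpq.2⟩
      | true =>
        rw [body_inc_t] at hAf hAt
        obtain ⟨L', hB', hM⟩ := (hR hr).1 _ hAf
        rw [hAt] at hB'
        injection hB' with h'
        subst h'
        cases hM with
        | cons hpq _ => exact ⟨k, c₁, c₂ + 1, by simp [stepM, hg'], hk.1, hk.2, hpq.2⟩
    | jzdec b k l =>
      have hk := hwf _ hmem
      cases b with
      | false =>
        rw [body_jz_f] at hAf hAt
        obtain ⟨L', hB', hM⟩ := (hR hr).1 _ hAf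
        rw [hAt] at hB'
        injection hB' with h'
        subst h'
        by_cases hc : c₁ = 0
        · have hz : R (.sassert (.aeq (.const c₁) (.const 0)) (Tn false k c₁ c₂))
              (.sassert (.aeq (.const c₁) (.const 0)) (Tn true k c₁ c₂)) := by
            cases hM with
            | cons hpq _ => exact hpq.2
          obtain ⟨ψ, B', hBe, hcase⟩ := (hR hz).2.2.2.2.2.1 _ _ rfl
          have hBe' : STy.sassert (.aeq (.const c₁) (.const 0)) (Tn true k c₁ c₂)
              = .sassert ψ B' := hBe
          injection hBe' with e1 e2
          subst e1; subst e2
          have hφ : (AProp.aeq (.const c₁) (.const 0)).holds σ0 := by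
            simp [AProp.holds, AExp.eval, hc]
          rcases hcase with ⟨_, _, hRk⟩ | ⟨hn, _⟩
          · exact ⟨k, c₁, c₂, by simp [stepM, hg', hc], hk.1.1, hk.1.2, hRk⟩
          · exact absurd hφ hn
        · have hz : R (.sassert (.agt (.const c₁) (.const 0)) (Tn false l (c₁ - 1) c₂))
              (.sassert (.agt (.const c₁) (.const 0)) (Tn true l (c₁ - 1) c₂)) := by
            cases hM with
            | cons _ hM' =>
              cases hM' with
              | cons hpq _ => exact hpq.2
          obtain ⟨ψ, B', hBe, hcase⟩ := (hR hz).2.2.2.2.2.1 _ _ rfl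
          have hBe' : STy.sassert (.agt (.const c₁) (.const 0)) (Tn true l (c₁ - 1) c₂)
              = .sassert ψ B' := hBe
          injection hBe' with e1 e2
          subst e1; subst e2
          have hφ : (AProp.agt (.const c₁) (.const 0)).holds σ0 := by
            simp [AProp.holds, AExp.eval]
            omega
          rcases hcase with ⟨_, _, hRk⟩ | ⟨hn, _⟩
          · exact ⟨l, c₁ - 1, c₂, by simp [stepM, hg', hc], hk.2.1, hk.2.2, hRk⟩
          · exact absurd hφ hn
      | true =>
        rw [body_jz_t] at hAf hAt
        obtain ⟨L', hB', hM⟩ := (hR hr).1 _ hAf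
        rw [hAt] at hB'
        injection hB' with h'
        subst h'
        by_cases hc : c₂ = 0
        · have hz : R (.sassert (.aeq (.const c₂) (.const 0)) (Tn false k c₁ c₂))
              (.sassert (.aeq (.const c₂) (.const 0)) (Tn true k c₁ c₂)) := by
            cases hM with
            | cons hpq _ => exact hpq.2
          obtain ⟨ψ, B', hBe, hcase⟩ := (hR hz).2.2.2.2.2.1 _ _ rfl
          have hBe' : STy.sassert (.aeq (.const c₂) (.const 0)) (Tn true k c₁ c₂)
              = .sassert ψ B' := hBe
          injection hBe' with e1 e2
          subst e1; subst e2
          have hφ : (AProp.aeq (.const c₂) (.const 0)).holds σ0 := by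
            simp [AProp.holds, AExp.eval, hc]
          rcases hcase with ⟨_, _, hRk⟩ | ⟨hn, _⟩
          · exact ⟨k, c₁, c₂, by simp [stepM, hg', hc], hk.1.1, hk.1.2, hRk⟩
          · exact absurd hφ hn
        · have hz : R (.sassert (.agt (.const c₂) (.const 0)) (Tn false l c₁ (c₂ - 1)))
              (.sassert (.agt (.const c₂) (.const 0)) (Tn true l c₁ (c₂ - 1))) := by
            cases hM with
            | cons _ hM' =>
              cases hM' with
              | cons hpq _ => exact hpq.2
          obtain ⟨ψ, B', hBe, hcase⟩ := (hR hz).2.2.2.2.2.1 _ _ rfl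
          have hBe' : STy.sassert (.agt (.const c₂) (.const 0)) (Tn true l c₁ (c₂ - 1))
              = .sassert ψ B' := hBe
          injection hBe' with e1 e2
          subst e1; subst e2
          have hφ : (AProp.agt (.const c₂) (.const 0)).holds σ0 := by
            simp [AProp.holds, AExp.eval]
            omega
          rcases hcase with ⟨_, _, hRk⟩ | ⟨hn, _⟩
          · exact ⟨l, c₁, c₂ - 1, by simp [stepM, hg', hc], hk.2.1, hk.2.2, hRk⟩
          · exact absurd hφ hn

end Main

/-- reduction from two-counter machines to type equality.
`T₁[m₀,n₀] ≡ T₁′[m₀,n₀]` holds iff the computation of `M` from the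
configuration `(1, m₀, n₀)` is infinite, i.e. `M` does not halt. -/
theorem reduction_two_counter (M : List Instr) (hne : M ≠ [])
    (hwf : ∀ ins ∈ M, WFInstr M.length ins) (m₀ n₀ : ℕ) :
    TpEq (sigOf M)
        (.tname (nameOf false 1) [.const m₀, .const n₀])
        (.tname (nameOf true 1) [.const m₀, .const n₀]) ↔
      (∀ n : ℕ, (iterM M n (1, m₀, n₀)).isSome) := by
  constructor
  · rintro ⟨R, hR, hr⟩
    have key : ∀ n, ∃ j d₁ d₂, iterM M n (1, m₀, n₀) = some (j, d₁, d₂) ∧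
        1 ≤ j ∧ j ≤ M.length ∧ R (Tn false j d₁ d₂) (Tn true j d₁ d₂) := by
      intro n
      induction n with
      | zero =>
        exact ⟨1, m₀, n₀, rfl, le_refl 1, List.length_pos_iff.mpr hne, hr⟩
      | succ n ih =>
        obtain ⟨j, d₁, d₂, hit, hj1, hj2, hrj⟩ := ih
        obtain ⟨j', d₁', d₂', hs, h1', h2', hr'⟩ := bisim_step M hwf hR hj1 hj2 hrj
        refine ⟨j', d₁', d₂', ?_, h1', h2', hr'⟩
        rw [iterM_succ_right, hit]
        exact hs
    intro n
    obtain ⟨j, d₁, d₂, hit, -⟩ := key n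
    rw [hit]
    rfl
  · intro hinf
    exact ⟨RR M, RR_bisim M hwf, RR.conf 1 m₀ n₀ le_rfl hinf⟩
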